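/- For every n ≥ 2 there exists a well-rounded lattice L in ℝⁿ possessing a weakly nearly orthogonal basis such that |S(L)| ≥ 4n − 2. -/

import Mathlib

open scoped RealInnerProductSpace
open Submodule Metric MeasureTheory

noncomputable section

abbrev Evec (n : ℕ) := EuclideanSpace ℝ (Fin n)

/-- The lattice generated (over ℤ) by the vectors `b 0, …, b (n-1)`. -/
def latticeOf {n : ℕ} (b : Fin n → Evec n) : Set (Evec n) :=
  {x | ∃ c : Fin n → ℤ, x = ∑ i, (c i : ℝ) • b i}

/-- The set of minimal vectors `S(L)` of a lattice `L`. -/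
def minVecs {n : ℕ} (L : Set (Evec n)) : Set (Evec n) :=
  {x | x ∈ L ∧ x ≠ 0 ∧ ∀ y ∈ L, y ≠ 0 → ‖x‖ ≤ ‖y‖}

/-- `L` is well-rounded: its minimal vectors span `ℝⁿ`. -/
def IsWellRounded {n : ℕ} (L : Set (Evec n)) : Prop :=
  Submodule.span ℝ (minVecs L) = ⊤

/-- `L` has minimal norm `m`. -/
def hasMinNorm {n : ℕ} (L : Set (Evec n)) (m : ℝ) : Prop :=
  (∃ x ∈ L, x ≠ 0 ∧ ‖x‖ = m) ∧ ∀ x ∈ L, x ≠ 0 → m ≤ ‖x‖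

/-- The angle in `[0, π/2]` between a vector `v` and a subspace `V`,
whose cosine is `‖proj_V v‖ / ‖v‖`. -/
def subAngle {n : ℕ} (v : Evec n) (V : Submodule ℝ (Evec n)) : ℝ :=
  Real.arccos (‖(orthogonalProjection V v : Evec n)‖ / ‖v‖)

/-- The ordered basis `b` is weakly θ-orthogonal. -/
def WeaklyOrth {n : ℕ} (θ : ℝ) (b : Fin n → Evec n) : Prop :=
  ∀ i : Fin n, 0 < (i : ℕ) →
    θ ≤ subAngle (b i) (Submodule.span ℝ (b '' {j | j < i}))

/-- The basis `b` is θ-orthogonal: every ordering of it is weakly θ-orthogonal. -/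
def Orth {n : ℕ} (θ : ℝ) (b : Fin n → Evec n) : Prop :=
  ∀ σ : Equiv.Perm (Fin n), WeaklyOrth θ (b ∘ σ)

/-- A nearly orthogonal basis is a π/3-orthogonal basis. -/
def NearlyOrth {n : ℕ} (b : Fin n → Evec n) : Prop := Orth (Real.pi / 3) b

/-- A weakly nearly orthogonal basis is a weakly π/3-orthogonal basis. -/
def WeaklyNearlyOrth {n : ℕ} (b : Fin n → Evec n) : Prop := WeaklyOrth (Real.pi / 3) b

/-- Coherence `C(L)` of a lattice. -/
def coherence {n : ℕ} (L : Set (Evec n)) : ℝ :=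
  sSup {t | ∃ x ∈ minVecs L, ∃ y ∈ minVecs L, x ≠ y ∧ x ≠ -y ∧
    t = abs ⟪x, y⟫ / (‖x‖ * ‖y‖)}

/-- `μ(B)`: minimal absolute cosine of angles between distinct basis vectors. -/
def muB {n : ℕ} (b : Fin n → Evec n) : ℝ :=
  sInf {t | ∃ i j : Fin n, i ≠ j ∧ t = abs ⟪b i, b j⟫ / (‖b i‖ * ‖b j‖)}

/-- `ν(B)`: maximal absolute cosine of angles between distinct basis vectors. -/
def nuB {n : ℕ} (b : Fin n → Evec n) : ℝ :=
  sSup {t | ∃ i j : Fin n, i ≠ j ∧ t = abs ⟪b i, b j⟫ / (‖b i‖ * ‖b j‖)}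

/-- The determinant of the lattice with basis `b`. -/
def latDet {n : ℕ} (b : Fin n → Evec n) : ℝ :=
  |(Matrix.of fun i j : Fin n => b j i).det|

/-- Packing density of a lattice with basis `b` and minimal norm `m`:
`ω_n · m^n / (2^n · det L)`. -/
def packDensity {n : ℕ} (m : ℝ) (b : Fin n → Evec n) : ℝ :=
  (volume (ball (0 : Evec n) 1)).toReal * m ^ n / (2 ^ n * latDet b)

/-- `L` is strongly eutactic. -/
def StronglyEutactic {n : ℕ} (L : Set (Evec n)) : Prop :=
  ∃ c : ℝ, 0 < c ∧ ∀ v : Evec n, ‖v‖ ^ 2 = c * ∑ᶠ x ∈ minVecs L, ⟪v, x⟫ ^ 2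

/-- `L` is perfect: `{x xᵀ : x ∈ S(L)}` spans the symmetric `n × n` matrices. -/
def IsPerfect {n : ℕ} (L : Set (Evec n)) : Prop :=
  ∀ A : Matrix (Fin n) (Fin n) ℝ, A.IsSymm →
    A ∈ Submodule.span ℝ ((fun x : Evec n => Matrix.of fun i j => x i * x j) '' minVecs L)

end

set_option linter.unusedSectionVars false

noncomputable section
namespace Stmt10
variable {n : ℕ} [NeZero n]

def ee (i : Fin n) : Evec n := EuclideanSpace.single i 1

def bb (i : Fin n) : Evec n :=
  if i = 0 then ee 0 else (1/2 : ℝ) • ee 0 + (Real.sqrt 3 / 2) • ee i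

lemma bb_apply (i j : Fin n) :
    bb i j = if j = 0 then (if i = 0 then 1 else 1/2)
      else (if j = i then Real.sqrt 3 / 2 else 0) := by
  unfold bb ee
  rcases eq_or_ne i 0 with h | h
  · rcases eq_or_ne j 0 with h2 | h2 <;> simp [h, h2, EuclideanSpace.single_apply]
  · rcases eq_or_ne j 0 with h2 | h2 <;>
      simp [h, h2, Ne.symm h, EuclideanSpace.single_apply]

lemma esum_apply {ι : Type*} (s : Finset ι) (v : ι → Evec n) (j : Fin n) :
    (∑ i ∈ s, v i) j = ∑ i ∈ s, v i j := by
  induction s using Finset.cons_induction with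
  | empty => rfl
  | cons a s ha ih => rw [Finset.sum_cons, Finset.sum_cons, PiLp.add_apply, ih]

lemma lat_apply (c : Fin n → ℝ) (j : Fin n) :
    (∑ i, c i • bb i) j
      = if j = 0 then c 0 + (1/2) * ∑ i ∈ Finset.univ.erase 0, c i
        else Real.sqrt 3 / 2 * c j := by
  rw [esum_apply]
  have hterm : ∀ i, (c i • bb i) j = c i * bb i j := fun i => rfl
  simp_rw [hterm, bb_apply]
  rcases eq_or_ne j 0 with h | h
  · rw [← Finset.add_sum_erase _ _ (Finset.mem_univ (0 : Fin n))]
    simp only [h, if_true, if_pos rfl]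
    rw [Finset.mul_sum]
    congr 1
    · ring
    · refine Finset.sum_congr rfl fun i hi => ?_
      rw [if_neg (Finset.ne_of_mem_erase hi)]
      ring
  · rw [Finset.sum_eq_single j]
    · simp [h]; ring
    · intro i _ hij
      simp [h, Ne.symm hij]
    · simp

lemma bb_linIndep : LinearIndependent ℝ (bb (n := n)) := by
  rw [Fintype.linearIndependent_iff]
  intro g hg
  have happ : ∀ j, (∑ i, g i • bb i) j = 0 := fun j => by rw [hg]; rfl
  have hne : ∀ j : Fin n, j ≠ 0 → g j = 0 := by
    intro j hj
    have := happ j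
    rw [lat_apply, if_neg hj] at this
    have h3 : Real.sqrt 3 ≠ 0 := by positivity
    field_simp at this
    rcases mul_eq_zero.mp (this.trans (mul_zero 2)) with h | h
    · exact absurd h h3
    · exact h
  intro i
  rcases eq_or_ne i 0 with rfl | hi
  · have := happ 0
    rw [lat_apply, if_pos rfl] at this
    have hz : ∑ i ∈ Finset.univ.erase (0 : Fin n), g i = 0 :=
      Finset.sum_eq_zero fun i hi => hne i (Finset.ne_of_mem_erase hi)
    rw [hz] at this
    linarith
  · exact hne i hi

def Tc (c : Fin n → ℤ) : ℤ := ∑ i ∈ Finset.univ.erase 0, c i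
def Sc (c : Fin n → ℤ) : ℤ := ∑ i ∈ Finset.univ.erase 0, (c i)^2

lemma Sc_nonneg (c : Fin n → ℤ) : 0 ≤ Sc c :=
  Finset.sum_nonneg fun _ _ => sq_nonneg _

lemma even_sub' (c : Fin n → ℤ) : Even (Sc c - Tc c) := by
  unfold Sc Tc
  rw [← Finset.sum_sub_distrib]
  apply Finset.even_sum
  intro i _
  have h : c i ^ 2 - c i = (c i - 1) * c i := by ring
  rw [h]
  rcases Int.even_or_odd (c i) with h | h
  · exact h.mul_left _
  · rcases h with ⟨k, hk⟩
    exact ⟨k * c i, by rw [hk]; ring⟩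

lemma sq_ge_one_of_ne_zero {a : ℤ} (h : a ≠ 0) : 1 ≤ a ^ 2 := by
  nlinarith [sq_nonneg a, Int.one_le_abs h, sq_abs a]

lemma int_key (c : Fin n → ℤ) (hc : c ≠ 0) : 4 ≤ (2 * c 0 + Tc c)^2 + 3 * Sc c := by
  have hS := Sc_nonneg c
  rcases (by omega : Sc c = 0 ∨ Sc c = 1 ∨ 2 ≤ Sc c) with h | h | h
  · have hz : ∀ i ∈ Finset.univ.erase (0 : Fin n), c i ^ 2 = 0 := by
      intro i hi
      exact (Finset.sum_eq_zero_iff_of_nonneg (fun i _ => sq_nonneg (c i))).mp h i hi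
    have hz' : ∀ i : Fin n, i ≠ 0 → c i = 0 := fun i hi =>
      pow_eq_zero_iff (by norm_num) |>.mp (hz i (Finset.mem_erase.mpr ⟨hi, Finset.mem_univ _⟩))
    have hT : Tc c = 0 := Finset.sum_eq_zero fun i hi => hz' i (Finset.ne_of_mem_erase hi)
    have hc0 : c 0 ≠ 0 := by
      intro h0
      apply hc
      funext i
      rcases eq_or_ne i 0 with rfl | hi
      · exact h0
      · exact hz' i hi
    have := sq_ge_one_of_ne_zero hc0
    rw [h, hT]
    nlinarith
  · have hodd : Odd (2 * c 0 + Tc c) := by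
      have hev := even_sub' c
      rw [h] at hev
      rcases Int.even_or_odd (Tc c) with he | ho
      · exfalso
        rcases hev with ⟨k, hk⟩
        rcases he with ⟨m, hm⟩
        omega
      · rcases ho with ⟨k, hk⟩
        exact ⟨c 0 + k, by omega⟩
    have hne : 2 * c 0 + Tc c ≠ 0 := by
      intro h0
      rw [h0] at hodd
      exact (Int.not_odd_iff_even.mpr Even.zero) hodd
    have := sq_ge_one_of_ne_zero hne
    nlinarith
  · nlinarith [sq_nonneg (2 * c 0 + Tc c)]

lemma sq_eq_one_cases {a : ℤ} (h : a ^ 2 = 1) : a = 1 ∨ a = -1 := by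
  have h0 : (a - 1) * (a + 1) = 0 := by nlinarith
  rcases mul_eq_zero.mp h0 with h | h
  · left; omega
  · right; omega

lemma classify (c : Fin n → ℤ) (h4 : (2 * c 0 + Tc c)^2 + 3 * Sc c = 4) :
    ((∀ i, i ≠ 0 → c i = 0) ∧ (c 0 = 1 ∨ c 0 = -1)) ∨
    (∃ j, j ≠ 0 ∧ (c j = 1 ∨ c j = -1) ∧ (∀ i, i ≠ 0 → i ≠ j → c i = 0) ∧
      (c 0 = 0 ∨ c 0 = - c j)) := by
  have hS := Sc_nonneg c
  have hsq := sq_nonneg (2 * c 0 + Tc c)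
  rcases (by omega : Sc c = 0 ∨ Sc c = 1) with h | h
  · left
    have hz' : ∀ i : Fin n, i ≠ 0 → c i = 0 := by
      intro i hi
      have := (Finset.sum_eq_zero_iff_of_nonneg (fun i _ => sq_nonneg (c i))).mp h i
        (Finset.mem_erase.mpr ⟨hi, Finset.mem_univ _⟩)
      exact pow_eq_zero_iff (by norm_num) |>.mp this
    have hT : Tc c = 0 := Finset.sum_eq_zero fun i hi => hz' i (Finset.ne_of_mem_erase hi)
    rw [h, hT] at h4
    have : c 0 ^ 2 = 1 := by nlinarith
    exact ⟨hz', sq_eq_one_cases this⟩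
  · right
    have hex : ∃ j ∈ Finset.univ.erase (0 : Fin n), c j ^ 2 ≠ 0 := by
      by_contra hno
      push_neg at hno
      have : Sc c = 0 := Finset.sum_eq_zero hno
      omega
    obtain ⟨j, hj, hjne⟩ := hex
    have hj0 : j ≠ 0 := Finset.ne_of_mem_erase hj
    have hle : c j ^ 2 ≤ Sc c :=
      Finset.single_le_sum (fun i _ => sq_nonneg (c i)) hj
    have hcj : c j ^ 2 = 1 := by
      have h1 : 1 ≤ c j ^ 2 := sq_ge_one_of_ne_zero (fun hz => hjne (by rw [hz]; ring))
      have h2 : c j ^ 2 ≤ 1 := h ▸ hle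
      linarith
    have hrest : ∀ i, i ≠ 0 → i ≠ j → c i = 0 := by
      intro i hi0 hij
      have hzero : ∑ k ∈ (Finset.univ.erase (0:Fin n)).erase j, c k ^ 2 = 0 := by
        have hsum : c j ^ 2 + ∑ k ∈ (Finset.univ.erase (0:Fin n)).erase j, c k ^ 2 = Sc c :=
          Finset.add_sum_erase _ (fun k => c k ^ 2) hj
        linarith
      have := (Finset.sum_eq_zero_iff_of_nonneg (fun k _ => sq_nonneg (c k))).mp hzero i
        (Finset.mem_erase.mpr ⟨hij, Finset.mem_erase.mpr ⟨hi0, Finset.mem_univ _⟩⟩)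
      exact pow_eq_zero_iff (by norm_num) |>.mp this
    have hT : Tc c = c j := by
      unfold Tc
      rw [Finset.sum_eq_single j]
      · intro i hi hij
        exact hrest i (Finset.ne_of_mem_erase hi) hij
      · intro habs
        exact absurd hj habs
    rw [h, hT] at h4
    have h1 : (2 * c 0 + c j) ^ 2 = 1 := by linarith
    have := sq_eq_one_cases h1
    refine ⟨j, hj0, sq_eq_one_cases hcj, hrest, ?_⟩
    rcases sq_eq_one_cases hcj with h' | h' <;> omega

lemma normsq (c : Fin n → ℤ) :
    4 * ‖∑ i, (c i : ℝ) • bb i‖ ^ 2 = (((2 * c 0 + Tc c)^2 + 3 * Sc c : ℤ) : ℝ) := by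
  have h3 : Real.sqrt 3 ^ 2 = 3 := Real.sq_sqrt (by norm_num)
  rw [EuclideanSpace.norm_eq, Real.sq_sqrt (by positivity)]
  rw [← Finset.add_sum_erase _ _ (Finset.mem_univ (0 : Fin n))]
  have hca : ∀ j, (∑ i, ((c i : ℝ)) • bb i) j
      = if j = 0 then (c 0 : ℝ) + (1/2) * ∑ i ∈ Finset.univ.erase 0, (c i : ℝ)
        else Real.sqrt 3 / 2 * (c j : ℝ) := fun j => lat_apply (fun i => (c i : ℝ)) j
  simp_rw [hca, Real.norm_eq_abs, sq_abs]
  rw [if_true]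
  have hterms : ∀ i ∈ Finset.univ.erase (0 : Fin n),
      (if i = 0 then (c 0 : ℝ) + (1/2) * ∑ k ∈ Finset.univ.erase 0, (c k : ℝ)
        else Real.sqrt 3 / 2 * (c i : ℝ)) ^ 2 = (3/4) * (c i : ℝ)^2 := by
    intro i hi
    rw [if_neg (Finset.ne_of_mem_erase hi)]
    rw [div_mul_eq_mul_div, div_pow, mul_pow, h3]
    ring
  rw [Finset.sum_congr rfl hterms, ← Finset.mul_sum]
  unfold Tc Sc
  push_cast
  ring

def eps (s : Bool) : ℤ := if s then 1 else -1

lemma eps_ne_zero (s : Bool) : eps s ≠ 0 := by cases s <;> simp [eps]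

lemma eps_inj : Function.Injective eps := by
  intro s t h
  cases s <;> cases t <;> simp [eps] at h ⊢ <;> omega

def Dom (n : ℕ) [NeZero n] := (Bool × Fin n) ⊕ (Bool × {i : Fin n // i ≠ 0})

instance : Fintype (Dom n) := by unfold Dom; infer_instance

def cf : Dom n → Fin n → ℤ
  | .inl (s, i) => fun j => if j = i then eps s else 0
  | .inr (s, i) => fun j => if j = i.1 then eps s else if j = 0 then - eps s else 0

def val (d : Dom n) : Evec n := ∑ i, (cf d i : ℝ) • bb i

lemma cf_inj : Function.Injective (cf (n := n)) := by
  rintro (⟨s, i⟩ | ⟨s, ⟨i, hi⟩⟩) (⟨t, k⟩ | ⟨t, ⟨k, hk⟩⟩) h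
  · have hi' := congrFun h i
    simp [cf] at hi'
    rcases eq_or_ne i k with rfl | hik
    · simp at hi'
      obtain rfl := eps_inj hi'
      rfl
    · rw [if_neg hik] at hi'
      exact absurd hi' (eps_ne_zero s)
  · exfalso
    have h0 := congrFun h 0
    have hk' := congrFun h k
    simp [cf, hk, Ne.symm hk] at h0 hk'
    rcases eq_or_ne i 0 with rfl | hi0
    · rw [if_neg hk] at hk'
      exact eps_ne_zero t hk'.symm
    · rw [if_neg (Ne.symm hi0)] at h0
      have := eps_ne_zero t
      omega
  · exfalso
    have h0 := congrFun h 0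
    have hi' := congrFun h i
    simp [cf, hi, Ne.symm hi] at h0 hi'
    rcases eq_or_ne k 0 with rfl | hk0
    · rw [if_neg hi] at hi'
      exact eps_ne_zero s hi'
    · rw [if_neg (Ne.symm hk0)] at h0
      have := eps_ne_zero s
      omega
  · have h0 := congrFun h 0
    have hi' := congrFun h i
    simp [cf, hi, hk, Ne.symm hi, Ne.symm hk] at h0 hi'
    have hst : s = t := eps_inj (by omega)
    subst hst
    rcases eq_or_ne i k with rfl | hik
    · rfl
    · rw [if_neg hik] at hi'
      exact absurd hi' (eps_ne_zero s)

lemma eps_sq (s : Bool) : eps s ^ 2 = 1 := by cases s <;> simp [eps]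

lemma key_val (d : Dom n) : (2 * cf d 0 + Tc (cf d))^2 + 3 * Sc (cf d) = 4 := by
  rcases d with ⟨s, i⟩ | ⟨s, ⟨i, hi⟩⟩
  · have hT : Tc (cf (Sum.inl (s, i) : Dom n)) = if i ∈ Finset.univ.erase (0 : Fin n) then eps s else 0 := by
      unfold Tc cf
      exact Finset.sum_ite_eq' _ _ _
    have hS : Sc (cf (Sum.inl (s, i) : Dom n)) = if i ∈ Finset.univ.erase (0 : Fin n) then 1 else 0 := by
      unfold Sc cf
      have : ∀ k : Fin n, (if k = i then eps s else 0)^2 = if k = i then 1 else 0 := by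
        intro k
        rcases eq_or_ne k i with rfl | h
        · simp [eps_sq]
        · simp [h]
      simp_rw [this]
      exact Finset.sum_ite_eq' _ _ _
    have hmem : (i ∈ Finset.univ.erase (0 : Fin n)) ↔ i ≠ 0 := by
      simp [Finset.mem_erase]
    have h0 : cf (Sum.inl (s, i) : Dom n) 0 = if (0 : Fin n) = i then eps s else 0 := rfl
    rcases eq_or_ne i 0 with rfl | h
    · rw [hT, hS, h0]
      simp [hmem]
      have := eps_sq s
      nlinarith
    · rw [hT, hS, h0, if_pos (hmem.mpr h), if_pos (hmem.mpr h), if_neg (Ne.symm h)]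
      have := eps_sq s
      nlinarith
  · have hcongr : ∀ k ∈ Finset.univ.erase (0 : Fin n),
        cf (Sum.inr (s, ⟨i, hi⟩) : Dom n) k = if k = i then eps s else 0 := by
      intro k hk
      show (if k = i then eps s else if k = 0 then - eps s else 0) = _
      rw [if_neg (Finset.ne_of_mem_erase hk)]
    have hmem : i ∈ Finset.univ.erase (0 : Fin n) := Finset.mem_erase.mpr ⟨hi, Finset.mem_univ _⟩
    have hT : Tc (cf (Sum.inr (s, ⟨i, hi⟩) : Dom n)) = eps s := by
      unfold Tc
      rw [Finset.sum_congr rfl hcongr, Finset.sum_ite_eq' _ _ _, if_pos hmem]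
    have hS : Sc (cf (Sum.inr (s, ⟨i, hi⟩) : Dom n)) = 1 := by
      unfold Sc
      rw [Finset.sum_congr rfl (fun k hk => by rw [hcongr k hk])]
      have : ∀ k : Fin n, (if k = i then eps s else 0)^2 = if k = i then 1 else 0 := by
        intro k
        rcases eq_or_ne k i with rfl | h
        · simp [eps_sq]
        · simp [h]
      simp_rw [this]
      rw [Finset.sum_ite_eq' _ _ _, if_pos hmem]
    have h0 : cf (Sum.inr (s, ⟨i, hi⟩) : Dom n) 0 = - eps s := by
      show (if (0:Fin n) = i then eps s else if (0:Fin n) = 0 then - eps s else 0) = _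
      rw [if_neg (Ne.symm hi), if_pos rfl]
    rw [hT, hS, h0]
    have := eps_sq s
    nlinarith

lemma norm_val (d : Dom n) : ‖val d‖ = 1 := by
  have h := normsq (cf d)
  rw [key_val d] at h
  have h1 : ‖val d‖ ^ 2 = 1 := by
    unfold val
    push_cast at h
    linarith
  calc ‖val d‖ = Real.sqrt (‖val d‖ ^ 2) := (Real.sqrt_sq (norm_nonneg _)).symm
    _ = 1 := by rw [h1]; exact Real.sqrt_one

lemma val_mem (d : Dom n) : val d ∈ latticeOf bb := ⟨cf d, rfl⟩

lemma lat_norm_ge {x : Evec n} (hx : x ∈ latticeOf bb) (hx0 : x ≠ 0) : 1 ≤ ‖x‖ := by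
  obtain ⟨c, rfl⟩ := hx
  have hc : c ≠ 0 := by
    rintro rfl
    simp at hx0
  have h := normsq c
  have hk := int_key c hc
  have : (4 : ℝ) ≤ 4 * ‖∑ i, (c i : ℝ) • bb i‖ ^ 2 := by
    rw [h]
    exact_mod_cast hk
  nlinarith [norm_nonneg (∑ i, (c i : ℝ) • bb i)]

lemma val_minVec (d : Dom n) : val d ∈ minVecs (latticeOf bb) := by
  refine ⟨val_mem d, ?_, ?_⟩
  · intro h
    have := norm_val d
    rw [h] at this
    simp at this
  · intro y hy hy0
    rw [norm_val d]
    exact lat_norm_ge hy hy0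

lemma eps_true : eps true = 1 := rfl
lemma eps_false : eps false = -1 := rfl

lemma val_inj : Function.Injective (val (n := n)) := by
  intro d d' h
  apply cf_inj
  have hsub : ∑ i, ((cf d i : ℝ) - (cf d' i : ℝ)) • bb i = 0 := by
    simp_rw [sub_smul]
    rw [Finset.sum_sub_distrib]
    unfold val at h
    rw [h]
    simp
  have := Fintype.linearIndependent_iff.mp bb_linIndep _ hsub
  funext i
  have hi := this i
  have : (cf d i : ℝ) = (cf d' i : ℝ) := by linarith
  exact_mod_cast this

lemma mem_range_of_eq (c : Fin n → ℤ) (d : Dom n) (h : ∀ k, c k = cf d k) :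
    (∑ i, (c i : ℝ) • bb i) ∈ Set.range (val (n := n)) :=
  ⟨d, by unfold val; congr 1; funext i; rw [h i]⟩

lemma minVecs_eq : minVecs (latticeOf (bb (n := n))) = Set.range val := by
  ext x
  constructor
  · rintro ⟨⟨c, rfl⟩, hx0, hmin⟩
    set x := ∑ i, (c i : ℝ) • bb i with hxdef
    have hle : ‖x‖ ≤ 1 := by
      have := hmin (val (Sum.inl (true, 0))) (val_mem _) ?_
      · exact this.trans_eq (norm_val _)
      · intro h
        have := norm_val (Sum.inl (true, 0) : Dom n)
        rw [h] at this
        simp at this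
    have hge : 1 ≤ ‖x‖ := lat_norm_ge ⟨c, rfl⟩ hx0
    have hnorm : ‖x‖ = 1 := le_antisymm hle hge
    have h4 : (2 * c 0 + Tc c)^2 + 3 * Sc c = 4 := by
      have h := normsq c
      rw [← hxdef, hnorm] at h
      norm_num at h
      exact_mod_cast h.symm
    rcases classify c h4 with ⟨hz, hc0⟩ | ⟨j, hj0, hcj, hrest, hc0⟩
    · rcases hc0 with h1 | h1
      · refine mem_range_of_eq c (Sum.inl (true, 0)) fun k => ?_
        show c k = if k = 0 then eps true else 0
        rcases eq_or_ne k 0 with rfl | hk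
        · simp [eps_true, h1]
        · simp [hk, hz k hk]
      · refine mem_range_of_eq c (Sum.inl (false, 0)) fun k => ?_
        show c k = if k = 0 then eps false else 0
        rcases eq_or_ne k 0 with rfl | hk
        · simp [eps_false, h1]
        · simp [hk, hz k hk]
    · have hsgn : ∃ s : Bool, c j = eps s := by
        rcases hcj with h | h
        · exact ⟨true, h⟩
        · exact ⟨false, h⟩
      obtain ⟨s, hs⟩ := hsgn
      rcases hc0 with h0 | h0
      · refine mem_range_of_eq c (Sum.inl (s, j)) fun k => ?_
        show c k = if k = j then eps s else 0
        rcases eq_or_ne k j with rfl | hk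
        · simp [hs]
        · rw [if_neg hk]
          rcases eq_or_ne k 0 with rfl | hk0
          · exact h0
          · exact hrest k hk0 hk
      · refine mem_range_of_eq c (Sum.inr (s, ⟨j, hj0⟩)) fun k => ?_
        show c k = if k = j then eps s else if k = 0 then - eps s else 0
        rcases eq_or_ne k j with rfl | hk
        · simp [hs]
        · rw [if_neg hk]
          rcases eq_or_ne k 0 with rfl | hk0
          · rw [if_pos rfl, h0, hs]
          · rw [if_neg hk0]
            exact hrest k hk0 hk
  · rintro ⟨d, rfl⟩
    exact val_minVec d

lemma bb_zero_eq : bb (0 : Fin n) = ee 0 := if_pos rfl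

lemma repr_ee (x : Evec n) : x = ∑ i, x i • ee i := by
  ext k
  rw [esum_apply]
  rw [Finset.sum_eq_single k]
  · show x k = x k * ee k k
    simp [ee, EuclideanSpace.single_apply]
  · intro i _ hik
    show x i * ee i k = 0
    simp [ee, EuclideanSpace.single_apply, Ne.symm hik]
  · simp

lemma ee_mem_span_bb (j : Fin n) : ee j ∈ Submodule.span ℝ (Set.range (bb (n := n))) := by
  rcases eq_or_ne j 0 with rfl | hj
  · rw [← bb_zero_eq]
    exact Submodule.subset_span ⟨0, rfl⟩
  · have h3 : Real.sqrt 3 ≠ 0 := by positivity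
    have hrepr : (2 / Real.sqrt 3) • bb j - (1 / Real.sqrt 3) • bb 0 = ee j := by
      rw [bb_zero_eq]
      show (2 / Real.sqrt 3) • bb j - (1 / Real.sqrt 3) • ee 0 = ee j
      rw [bb, if_neg hj, smul_add, smul_smul, smul_smul]
      have e1 : 2 / Real.sqrt 3 * (1/2) = 1 / Real.sqrt 3 := by ring
      have e2 : 2 / Real.sqrt 3 * (Real.sqrt 3 / 2) = 1 := by field_simp
      rw [e1, e2, one_smul, add_sub_cancel_left]
    rw [← hrepr]
    exact Submodule.sub_mem _
      (Submodule.smul_mem _ _ (Submodule.subset_span ⟨j, rfl⟩))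
      (Submodule.smul_mem _ _ (Submodule.subset_span ⟨0, rfl⟩))

lemma span_bb_top : Submodule.span ℝ (Set.range (bb (n := n))) = ⊤ := by
  rw [eq_top_iff]
  intro x _
  rw [repr_ee x]
  exact Submodule.sum_mem _ fun i _ => Submodule.smul_mem _ _ (ee_mem_span_bb i)

lemma val_inl_true (i : Fin n) : val (Sum.inl (true, i) : Dom n) = bb i := by
  unfold val
  rw [Finset.sum_eq_single i]
  · show ((if i = i then eps true else 0 : ℤ) : ℝ) • bb i = bb i
    simp [eps_true]
  · intro k _ hk
    show ((if k = i then eps true else 0 : ℤ) : ℝ) • bb k = 0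
    simp [hk]
  · simp

lemma bb_minVec (i : Fin n) : bb i ∈ minVecs (latticeOf (bb (n := n))) := by
  rw [← val_inl_true i]
  exact val_minVec _

lemma wellRounded : IsWellRounded (latticeOf (bb (n := n))) := by
  unfold IsWellRounded
  apply le_antisymm le_top
  rw [← span_bb_top]
  apply Submodule.span_le.mpr
  rintro x ⟨i, rfl⟩
  exact Submodule.subset_span (bb_minVec i)

lemma norm_bb (i : Fin n) : ‖bb i‖ = 1 := by
  rw [← val_inl_true i]
  exact norm_val _

lemma inner_ee (x : Evec n) (i : Fin n) : ⟪x, ee i⟫ = x i := by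
  simp [ee, EuclideanSpace.inner_single_right]

lemma weakOrth : WeaklyNearlyOrth (bb (n := n)) := by
  intro i hi
  have hi0 : i ≠ 0 := by
    intro h
    rw [h] at hi
    simp at hi
  set V := Submodule.span ℝ (bb '' {j | j < i}) with hV
  have h0lt : (0 : Fin n) < i := by rw [Fin.lt_def, Fin.val_zero]; exact hi
  have h0mem : bb 0 ∈ V := Submodule.subset_span ⟨0, h0lt, rfl⟩
  have h0mem' : ee 0 ∈ V := by rwa [bb_zero_eq] at h0mem
  have hperp : ee i ∈ Vᗮ := by
    rw [Submodule.mem_orthogonal]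
    intro u hu
    induction hu using Submodule.span_induction with
    | mem u hu =>
        obtain ⟨j, hj, rfl⟩ := hu
        have hji : j ≠ i := ne_of_lt hj
        rw [inner_ee, bb_apply, if_neg hi0, if_neg (Ne.symm hji)]
    | zero => exact inner_zero_left _
    | add u v _ _ hu hv => rw [inner_add_left, hu, hv, add_zero]
    | smul a u _ hu => rw [inner_smul_left, hu, mul_zero]
  have hproj : (orthogonalProjection V (bb i) : Evec n) = (1/2 : ℝ) • ee 0 := by
    rw [bb, if_neg hi0, map_add, _root_.map_smul, _root_.map_smul]
    rw [Submodule.coe_add, Submodule.coe_smul, Submodule.coe_smul]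
    rw [(show (orthogonalProjection V (ee 0) : Evec n) = ee 0 from
        Submodule.starProjection_eq_self_iff.mpr h0mem'),
      Submodule.orthogonalProjectionOnto_apply_of_mem_orthogonal hperp]
    simp
  have hnormp : ‖(orthogonalProjection V (bb i) : Evec n)‖ = 1/2 := by
    rw [hproj, norm_smul]
    simp [ee, EuclideanSpace.norm_single]
  unfold subAngle
  rw [hnormp, norm_bb, div_one]
  have : Real.arccos (1/2) = Real.pi / 3 := by
    rw [← Real.cos_pi_div_three]
    exact Real.arccos_cos (by positivity) (by linarith [Real.pi_pos])
  rw [this]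

lemma ncard_minVecs : (minVecs (latticeOf (bb (n := n)))).ncard = 2*n + 2*(n-1) := by
  rw [minVecs_eq, ← Set.image_univ, Set.ncard_image_of_injective _ val_inj, Set.ncard_univ,
    Nat.card_eq_fintype_card]
  have e : Fintype.card (Dom n)
      = Fintype.card ((Bool × Fin n) ⊕ (Bool × {i : Fin n // i ≠ 0})) :=
    Fintype.card_congr (Equiv.refl _)
  rw [e]
  have hsub : Fintype.card {i : Fin n // i ≠ 0} = n - 1 := by
    simp [Fintype.card_subtype_compl]
  simp only [Fintype.card_sum, Fintype.card_prod, Fintype.card_bool, Fintype.card_fin, hsub]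

end Stmt10
end

/-- for every `n ≥ 2` there is a well-rounded lattice with a weakly
nearly orthogonal basis and at least `4n - 2` minimal vectors. -/
theorem stmt_10 (n : ℕ) (hn : 2 ≤ n) :
    ∃ b : Fin n → Evec n, LinearIndependent ℝ b ∧ WeaklyNearlyOrth b ∧
      IsWellRounded (latticeOf b) ∧ 4 * n - 2 ≤ (minVecs (latticeOf b)).ncard := by
  haveI : NeZero n := ⟨by omega⟩
  refine ⟨Stmt10.bb, Stmt10.bb_linIndep, Stmt10.weakOrth, Stmt10.wellRounded, ?_⟩
  rw [Stmt10.ncard_minVecs]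
  omega
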